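/- Let f₁, f₂, f₃ be long-tailed functions on [0,∞) with ∫₀^∞ fᵢ(y) dy = ∞ for each i. If f₁(x) = o(f₂(x)) as x → ∞, then f₁⊗f₃(x) = o(f₂⊗f₃(x)) as x → ∞. -/

import Mathlib

open Filter MeasureTheory Asymptotics

/-- The convolution `u ⊗ v (x) = ∫₀ˣ u(x-y) v(y) dy`. -/
noncomputable def conv (u v : ℝ → ℝ) (x : ℝ) : ℝ := ∫ y in (0:ℝ)..x, u (x - y) * v y

/-- `f` is long-tailed: measurable, locally bounded, nonnegative, eventually positive,
and `f(x - t) ∼ f(x)` as `x → ∞` for each fixed `t`. -/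
structure LongTailed (f : ℝ → ℝ) : Prop where
  meas : Measurable f
  nonneg : ∀ x, 0 ≤ f x
  locBdd : ∀ r : ℝ, ∃ C : ℝ, ∀ x ∈ Set.Icc (0:ℝ) r, f x ≤ C
  evPos : ∀ᶠ x in atTop, 0 < f x
  tail : ∀ t : ℝ, Tendsto (fun x => f (x - t) / f x) atTop (nhds 1)

/-- log-difference tends to 0 -/
lemma LongTailed.log_tail {f : ℝ → ℝ} (h : LongTailed f) (t : ℝ) :
    Tendsto (fun x => Real.log (f (x - t)) - Real.log (f x)) atTop (nhds 0) := by
  have h1 : Tendsto (fun x => Real.log (f (x - t) / f x)) atTop (nhds 0) := by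
    have := (Real.continuousAt_log one_ne_zero).tendsto.comp (h.tail t)
    simpa [Function.comp_def] using this
  refine h1.congr' ?_
  have hpos := h.evPos
  have hpos2 : ∀ᶠ x in atTop, 0 < f (x - t) :=
    (tendsto_atTop_add_const_right atTop (-t) tendsto_id).eventually h.evPos
  filter_upwards [hpos, hpos2] with x hx hx2
  rw [Real.log_div (ne_of_gt hx2) (ne_of_gt hx)]

/-- Uniform convergence theorem for long-tailed functions. -/
lemma LongTailed.uct {f : ℝ → ℝ} (h : LongTailed f) {T ε : ℝ} (hT : 0 < T) (hε : 0 < ε) :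
    ∀ᶠ x in atTop, ∀ t ∈ Set.Icc (0:ℝ) T, |f (x - t) / f x - 1| ≤ ε := by
  by_contra hcon
  rw [Filter.not_eventually] at hcon
  -- extract sequences
  have hseq : ∀ n : ℕ, ∃ x : ℝ, (n : ℝ) ≤ x ∧ ∃ t ∈ Set.Icc (0:ℝ) T,
      ε < |f (x - t) / f x - 1| := by
    intro n
    rcases (frequently_atTop.mp hcon (n : ℝ)) with ⟨x, hx, hx2⟩
    push_neg at hx2
    rcases hx2 with ⟨t, ht, ht2⟩
    exact ⟨x, hx, t, ht, ht2⟩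
  choose X hX t ht hbad using hseq
  have hXtop : Tendsto X atTop atTop :=
    tendsto_atTop_mono hX tendsto_natCast_atTop_atTop
  set Y : ℕ → ℝ := fun n => X n - t n with hY
  have hYtop : Tendsto Y atTop atTop := by
    apply tendsto_atTop_mono (f := fun n => X n - T)
    · intro n; exact sub_le_sub_left (ht n).2 _
    · exact tendsto_atTop_add_const_right _ _ hXtop
  set g : ℝ → ℝ := fun x => Real.log (f x) with hg
  have hgmeas : Measurable g := Real.measurable_log.comp h.meas
  -- Egorov for F n s = g (X n - s) - g (X n) on Icc 0 (2T)
  set F : ℕ → ℝ → ℝ := fun n s => g (X n - s) - g (X n) with hF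
  set F' : ℕ → ℝ → ℝ := fun n s => g (Y n - s) - g (Y n) with hF'
  have hFmeas : ∀ n, StronglyMeasurable (F n) := by
    intro n
    exact ((hgmeas.comp (measurable_const.sub measurable_id)).sub measurable_const).stronglyMeasurable
  have hF'meas : ∀ n, StronglyMeasurable (F' n) := by
    intro n
    exact ((hgmeas.comp (measurable_const.sub measurable_id)).sub measurable_const).stronglyMeasurable
  have hFlim : ∀ s : ℝ, Tendsto (fun n => F n s) atTop (nhds 0) := by
    intro s; exact (h.log_tail s).comp hXtop
  have hF'lim : ∀ s : ℝ, Tendsto (fun n => F' n s) atTop (nhds 0) := by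
    intro s; exact (h.log_tail s).comp hYtop
  obtain ⟨E, hEsub, hEm, hEμ, hEunif⟩ :=
    MeasureTheory.tendstoUniformlyOn_of_ae_tendsto (μ := volume) hFmeas
      stronglyMeasurable_const (measurableSet_Icc (a := (0:ℝ)) (b := 2*T))
      (by simp [Real.volume_Icc, ENNReal.mul_eq_top]) (Filter.Eventually.of_forall fun s _ => hFlim s)
      (show (0:ℝ) < T/4 by linarith)
  obtain ⟨E', hE'sub, hE'm, hE'μ, hE'unif⟩ :=
    MeasureTheory.tendstoUniformlyOn_of_ae_tendsto (μ := volume) hF'meas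
      stronglyMeasurable_const (measurableSet_Icc (a := (0:ℝ)) (b := T))
      (by simp [Real.volume_Icc]) (Filter.Eventually.of_forall fun s _ => hF'lim s)
      (show (0:ℝ) < T/4 by linarith)
  -- for each n choose a good shift s
  have hgood : ∀ n : ℕ, ∃ s : ℝ, s ∈ Set.Icc (0:ℝ) T ∧ s ∉ E' ∧ t n + s ∉ E := by
    intro n
    by_contra hno
    push_neg at hno
    have hsub : Set.Icc (0:ℝ) T ⊆ E' ∪ ((fun s => t n + s) ⁻¹' E) := by
      intro s hs
      by_cases h1 : s ∈ E'
      · exact Or.inl h1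
      · exact Or.inr (hno s hs h1)
    have hμpre : volume ((fun s => t n + s) ⁻¹' E) = volume E :=
      measure_preimage_add volume (t n) E
    have hle : volume (Set.Icc (0:ℝ) T) ≤ volume E' + volume E := by
      calc volume (Set.Icc (0:ℝ) T) ≤ volume (E' ∪ ((fun s => t n + s) ⁻¹' E)) :=
            measure_mono hsub
        _ ≤ volume E' + volume ((fun s => t n + s) ⁻¹' E) := measure_union_le _ _
        _ = volume E' + volume E := by rw [hμpre]
    rw [Real.volume_Icc] at hle
    have : ENNReal.ofReal (T - 0) ≤ ENNReal.ofReal (T/4) + ENNReal.ofReal (T/4) :=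
      hle.trans (add_le_add hE'μ hEμ)
    rw [← ENNReal.ofReal_add (by linarith) (by linarith)] at this
    rw [ENNReal.ofReal_le_ofReal_iff (by linarith)] at this
    linarith
  choose s hs hsE' hsE using hgood
  -- F n (t n + s n) - F' n (s n) = g (X n - t n) - g (X n)
  have hkey : ∀ n, g (X n - t n) - g (X n) = F n (t n + s n) - F' n (s n) := by
    intro n
    simp only [hF, hF', hY]
    have : X n - (t n + s n) = X n - t n - s n := by ring
    rw [this]; ring
  -- uniform convergence gives the two terms tend to 0
  have hmem1 : ∀ n, t n + s n ∈ Set.Icc (0:ℝ) (2*T) \ E := by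
    intro n
    refine ⟨⟨by have := (ht n).1; have := (hs n).1; linarith,
      by have := (ht n).2; have := (hs n).2; linarith⟩, hsE n⟩
  have hmem2 : ∀ n, s n ∈ Set.Icc (0:ℝ) T \ E' := fun n => ⟨hs n, hsE' n⟩
  have ht1 : Tendsto (fun n => F n (t n + s n)) atTop (nhds 0) := by
    rw [Metric.tendsto_atTop]
    intro δ hδ
    rw [Metric.tendstoUniformlyOn_iff] at hEunif
    rcases eventually_atTop.mp (hEunif δ hδ) with ⟨N, hN⟩
    exact ⟨N, fun n hn => by rw [dist_comm]; exact hN n hn _ (hmem1 n)⟩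
  have ht2 : Tendsto (fun n => F' n (s n)) atTop (nhds 0) := by
    rw [Metric.tendsto_atTop]
    intro δ hδ
    rw [Metric.tendstoUniformlyOn_iff] at hE'unif
    rcases eventually_atTop.mp (hE'unif δ hδ) with ⟨N, hN⟩
    exact ⟨N, fun n hn => by rw [dist_comm]; exact hN n hn _ (hmem2 n)⟩
  have hD : Tendsto (fun n => g (X n - t n) - g (X n)) atTop (nhds 0) := by
    have := ht1.sub ht2
    rw [sub_zero] at this
    exact this.congr fun n => (hkey n).symm
  have hratio : Tendsto (fun n => f (X n - t n) / f (X n)) atTop (nhds 1) := by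
    have hexp : Tendsto (fun n => Real.exp (g (X n - t n) - g (X n))) atTop (nhds 1) := by
      have := (Real.continuous_exp.tendsto 0).comp hD
      simpa [Function.comp_def] using this
    refine hexp.congr' ?_
    have hp1 : ∀ᶠ n in atTop, 0 < f (X n) := hXtop.eventually h.evPos
    have hp2 : ∀ᶠ n in atTop, 0 < f (X n - t n) := hYtop.eventually h.evPos
    filter_upwards [hp1, hp2] with n h1 h2
    rw [hg, Real.exp_sub, Real.exp_log h2, Real.exp_log h1]
  have hsmall : ∀ᶠ n in atTop, |f (X n - t n) / f (X n) - 1| < ε := by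
    have := hratio.eventually (Metric.ball_mem_nhds (1:ℝ) hε)
    filter_upwards [this] with n hn
    simpa [Real.dist_eq] using hn
  rcases hsmall.exists with ⟨n, hn⟩
  exact absurd (hbad n) (not_lt.mpr hn.le)

lemma LongTailed.integrableOn_mul {u v : ℝ → ℝ} (hu : LongTailed u) (hv : LongTailed v)
    (x : ℝ) (hx : 0 ≤ x) :
    IntegrableOn (fun y => u (x - y) * v y) (Set.Icc 0 x) volume := by
  obtain ⟨Cu, hCu⟩ := hu.locBdd x
  obtain ⟨Cv, hCv⟩ := hv.locBdd x
  have hCu0 : 0 ≤ Cu := le_trans (hu.nonneg 0) (hCu 0 ⟨le_refl _, hx⟩)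
  refine Integrable.mono' (g := fun _ => Cu * Cv)
    (integrableOn_const measure_Icc_lt_top.ne)
    ((hu.meas.comp (measurable_const.sub measurable_id)).mul hv.meas).aestronglyMeasurable ?_
  refine ae_restrict_of_forall_mem measurableSet_Icc fun y hy => ?_
  have hxy : x - y ∈ Set.Icc (0:ℝ) x := ⟨by linarith [hy.2], by linarith [hy.1]⟩
  have h1 : ‖u (x - y) * v y‖ = u (x - y) * v y := by
    rw [Real.norm_eq_abs, abs_of_nonneg (mul_nonneg (hu.nonneg _) (hv.nonneg _))]
  rw [h1]
  exact mul_le_mul (hCu _ hxy) (hCv _ hy) (hv.nonneg _) hCu0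

lemma LongTailed.intervalIntegrable_mul {u v : ℝ → ℝ} (hu : LongTailed u) (hv : LongTailed v)
    {x a b : ℝ} (ha : a ∈ Set.Icc (0:ℝ) x) (hb : b ∈ Set.Icc (0:ℝ) x) :
    IntervalIntegrable (fun y => u (x - y) * v y) volume a b := by
  rw [intervalIntegrable_iff]
  exact (hu.integrableOn_mul hv x (ha.1.trans ha.2)).mono_set
    (Set.uIoc_subset_uIcc.trans (Set.uIcc_subset_Icc ha hb))

lemma LongTailed.intervalIntegrable {f : ℝ → ℝ} (h : LongTailed f) {a b : ℝ}
    (ha : 0 ≤ a) (hb : 0 ≤ b) : IntervalIntegrable f volume a b := by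
  obtain ⟨C, hC⟩ := h.locBdd (max a b)
  rw [intervalIntegrable_iff]
  refine Integrable.mono' (g := fun _ => C)
    (integrableOn_const (by rw [Set.uIoc]; exact measure_Ioc_lt_top.ne))
    h.meas.aestronglyMeasurable ?_
  refine ae_restrict_of_forall_mem measurableSet_uIoc fun y hy => ?_
  have hy' : y ∈ Set.Icc (0:ℝ) (max a b) :=
    (Set.uIoc_subset_uIcc.trans
      (Set.uIcc_subset_Icc ⟨ha, le_max_left a b⟩ ⟨hb, le_max_right a b⟩)) hy
  rw [Real.norm_eq_abs, abs_of_nonneg (h.nonneg _)]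
  exact hC _ hy'

/-- If `f₁, f₂, f₃` are long-tailed with divergent integrals and `f₁ = o(f₂)`, then
`f₁ ⊗ f₃ = o(f₂ ⊗ f₃)`. -/
theorem conv_isLittleO_of_isLittleO (f₁ f₂ f₃ : ℝ → ℝ)
    (h1 : LongTailed f₁) (h2 : LongTailed f₂) (h3 : LongTailed f₃)
    (hdiv1 : Tendsto (fun x => ∫ y in (0:ℝ)..x, f₁ y) atTop atTop)
    (hdiv2 : Tendsto (fun x => ∫ y in (0:ℝ)..x, f₂ y) atTop atTop)
    (hdiv3 : Tendsto (fun x => ∫ y in (0:ℝ)..x, f₃ y) atTop atTop)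
    (ho : (fun x => f₁ x) =o[atTop] (fun x => f₂ x)) :
    (fun x => conv f₁ f₃ x) =o[atTop] (fun x => conv f₂ f₃ x) := by
  rw [isLittleO_iff]
  intro c hc
  obtain ⟨A₀, hA₀⟩ : ∃ A₀, ∀ z, A₀ ≤ z → f₁ z ≤ c/2 * f₂ z := by
    have h := isLittleO_iff.mp ho (half_pos hc)
    rcases eventually_atTop.mp h with ⟨A₀, hA⟩
    refine ⟨A₀, fun z hz => ?_⟩
    have := hA z hz
    rwa [Real.norm_eq_abs, Real.norm_eq_abs, abs_of_nonneg (h1.nonneg z),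
      abs_of_nonneg (h2.nonneg z)] at this
  set A := max A₀ 0 with hAdef
  have hA : (0:ℝ) ≤ A := le_max_right _ _
  have hA₀' : ∀ z, A ≤ z → f₁ z ≤ c/2 * f₂ z :=
    fun z hz => hA₀ z ((le_max_left _ _).trans hz)
  obtain ⟨C₁, hC₁⟩ := h1.locBdd A
  set C := max C₁ 0 with hCdef
  have hC0 : (0:ℝ) ≤ C := le_max_right _ _
  have hC : ∀ z ∈ Set.Icc (0:ℝ) A, f₁ z ≤ C := fun z hz => (hC₁ z hz).trans (le_max_left _ _)
  set K := 6 * A * C / c + 1 with hKdef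
  obtain ⟨B, hBK, hBA⟩ : ∃ B, K ≤ (∫ y in (0:ℝ)..B, f₂ y) ∧ max A 1 ≤ B :=
    ((hdiv2.eventually (eventually_ge_atTop K)).and (eventually_ge_atTop (max A 1))).exists
  have hB0 : (0:ℝ) < B := lt_of_lt_of_le one_pos ((le_max_right A 1).trans hBA)
  have hAB : A ≤ B := (le_max_left A 1).trans hBA
  have huct := h3.uct (T := B) (ε := 1/2) hB0 (by norm_num)
  filter_upwards [huct, h3.evPos, eventually_ge_atTop B] with x hu h3x hxB
  have hxA : A ≤ x := hAB.trans hxB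
  have hx0 : (0:ℝ) ≤ x := hB0.le.trans hxB
  have hmem0 : (0:ℝ) ∈ Set.Icc (0:ℝ) x := ⟨le_refl _, hx0⟩
  have hmemx : x ∈ Set.Icc (0:ℝ) x := ⟨hx0, le_refl _⟩
  have hmemxA : x - A ∈ Set.Icc (0:ℝ) x := ⟨by linarith, by linarith⟩
  have hmemB : B ∈ Set.Icc (0:ℝ) x := ⟨hB0.le, hxB⟩
  have i13a := h1.intervalIntegrable_mul h3 hmem0 hmemxA
  have i13b := h1.intervalIntegrable_mul h3 hmemxA hmemx
  have i23a := h2.intervalIntegrable_mul h3 hmem0 hmemxA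
  have i23b := h2.intervalIntegrable_mul h3 hmemxA hmemx
  have i32a : IntervalIntegrable (fun u => f₃ (x - u) * f₂ u) volume 0 B :=
    h3.intervalIntegrable_mul h2 hmem0 hmemB
  have i32b : IntervalIntegrable (fun u => f₃ (x - u) * f₂ u) volume B x :=
    h3.intervalIntegrable_mul h2 hmemB hmemx
  -- ratio bounds from UCT
  have hrat : ∀ u ∈ Set.Icc (0:ℝ) B, 1/2 * f₃ x ≤ f₃ (x - u) ∧ f₃ (x - u) ≤ 3/2 * f₃ x := by
    intro u hmu
    have h' := abs_le.mp (hu u hmu)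
    constructor
    · have h1' : 1/2 ≤ f₃ (x - u) / f₃ x := by linarith [h'.1]
      calc 1/2 * f₃ x ≤ f₃ (x - u) / f₃ x * f₃ x := mul_le_mul_of_nonneg_right h1' h3x.le
        _ = f₃ (x - u) := div_mul_cancel₀ _ (ne_of_gt h3x)
    · have h2' : f₃ (x - u) / f₃ x ≤ 3/2 := by linarith [h'.2]
      calc f₃ (x - u) = f₃ (x - u) / f₃ x * f₃ x := (div_mul_cancel₀ _ (ne_of_gt h3x)).symm
        _ ≤ 3/2 * f₃ x := mul_le_mul_of_nonneg_right h2' h3x.le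
  -- split conv f₁ f₃
  have hsplit1 : conv f₁ f₃ x = (∫ y in (0:ℝ)..(x - A), f₁ (x - y) * f₃ y)
      + ∫ y in (x - A)..x, f₁ (x - y) * f₃ y :=
    (intervalIntegral.integral_add_adjacent_intervals i13a i13b).symm
  have hsplit2 : conv f₂ f₃ x = (∫ y in (0:ℝ)..(x - A), f₂ (x - y) * f₃ y)
      + ∫ y in (x - A)..x, f₂ (x - y) * f₃ y :=
    (intervalIntegral.integral_add_adjacent_intervals i23a i23b).symm
  -- piece 1
  have hp1 : (∫ y in (0:ℝ)..(x - A), f₁ (x - y) * f₃ y)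
      ≤ c/2 * ∫ y in (0:ℝ)..(x - A), f₂ (x - y) * f₃ y := by
    rw [← intervalIntegral.integral_const_mul]
    refine intervalIntegral.integral_mono_on (by linarith) i13a (i23a.const_mul _) ?_
    intro y hy
    have hzy : A ≤ x - y := by linarith [hy.2]
    calc f₁ (x - y) * f₃ y ≤ (c/2 * f₂ (x - y)) * f₃ y :=
          mul_le_mul_of_nonneg_right (hA₀' _ hzy) (h3.nonneg y)
      _ = c/2 * (f₂ (x - y) * f₃ y) := by ring
  -- piece 2 (tail)
  have htail : (∫ y in (x - A)..x, f₁ (x - y) * f₃ y) ≤ C * (3/2 * f₃ x * A) := by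
    have step1 : (∫ y in (x - A)..x, f₁ (x - y) * f₃ y) ≤ ∫ y in (x - A)..x, C * f₃ y := by
      refine intervalIntegral.integral_mono_on (by linarith)
        i13b ((h3.intervalIntegrable (by linarith) hx0).const_mul _) ?_
      intro y hy
      have hzy : x - y ∈ Set.Icc (0:ℝ) A := ⟨by linarith [hy.2], by linarith [hy.1]⟩
      exact mul_le_mul_of_nonneg_right (hC _ hzy) (h3.nonneg y)
    have step2 : (∫ y in (x - A)..x, C * f₃ y) = C * ∫ y in (x - A)..x, f₃ y :=
      intervalIntegral.integral_const_mul _ _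
    have step3 : (∫ y in (x - A)..x, f₃ y) = ∫ u in (0:ℝ)..A, f₃ (x - u) := by
      have := intervalIntegral.integral_comp_sub_left (a := (0:ℝ)) (b := A) f₃ x
      rw [this, sub_zero]
    have step4 : (∫ u in (0:ℝ)..A, f₃ (x - u)) ≤ 3/2 * f₃ x * A := by
      have hint : IntervalIntegrable (fun u => f₃ (x - u)) volume 0 A := by
        have := ((h3.intervalIntegrable (a := x - A) (b := x) (by linarith) hx0).comp_sub_left x).symm
        simpa using this
      calc (∫ u in (0:ℝ)..A, f₃ (x - u)) ≤ ∫ u in (0:ℝ)..A, 3/2 * f₃ x := by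
            refine intervalIntegral.integral_mono_on hA hint
              (intervalIntegrable_const) ?_
            intro u hmu
            exact (hrat u ⟨hmu.1, hmu.2.trans hAB⟩).2
        _ = 3/2 * f₃ x * A := by
            rw [intervalIntegral.integral_const, smul_eq_mul, sub_zero]
            ring
    calc (∫ y in (x - A)..x, f₁ (x - y) * f₃ y) ≤ C * ∫ y in (x - A)..x, f₃ y := by
          rw [← step2]; exact step1
      _ = C * ∫ u in (0:ℝ)..A, f₃ (x - u) := by rw [step3]
      _ ≤ C * (3/2 * f₃ x * A) := mul_le_mul_of_nonneg_left step4 hC0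
  -- lower bound for conv f₂ f₃
  have hflip : conv f₂ f₃ x = ∫ u in (0:ℝ)..x, f₃ (x - u) * f₂ u := by
    have key := intervalIntegral.integral_comp_sub_left (a := (0:ℝ)) (b := x)
      (fun u => f₃ (x - u) * f₂ u) x
    simp only [sub_sub_cancel, sub_self, sub_zero] at key
    rw [conv, ← key]
    congr 1
    ext y
    ring
  have hlow : 1/2 * f₃ x * (∫ y in (0:ℝ)..B, f₂ y) ≤ conv f₂ f₃ x := by
    rw [hflip, ← intervalIntegral.integral_add_adjacent_intervals i32a i32b]
    have h2nd : 0 ≤ ∫ u in B..x, f₃ (x - u) * f₂ u :=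
      intervalIntegral.integral_nonneg hxB
        (fun u _ => mul_nonneg (h3.nonneg _) (h2.nonneg _))
    have h1st : 1/2 * f₃ x * (∫ y in (0:ℝ)..B, f₂ y) ≤ ∫ u in (0:ℝ)..B, f₃ (x - u) * f₂ u := by
      rw [← intervalIntegral.integral_const_mul]
      refine intervalIntegral.integral_mono_on hB0.le
        ((h2.intervalIntegrable (le_refl 0) hB0.le).const_mul _) i32a ?_
      intro u hmu
      exact mul_le_mul_of_nonneg_right (hrat u hmu).1 (h2.nonneg u)
    linarith
  -- combine
  have hq2 : 0 ≤ ∫ y in (x - A)..x, f₂ (x - y) * f₃ y :=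
    intervalIntegral.integral_nonneg (by linarith)
      (fun y _ => mul_nonneg (h2.nonneg _) (h3.nonneg _))
  have hcpos : 0 ≤ conv f₂ f₃ x := by
    nlinarith [intervalIntegral.integral_nonneg (μ := volume) (a := (0:ℝ)) (b := B) hB0.le
      (fun y _ => h2.nonneg y), h3x.le, hlow]
  have hq1 : (∫ y in (0:ℝ)..(x - A), f₂ (x - y) * f₃ y) ≤ conv f₂ f₃ x := by
    rw [hsplit2]; linarith
  have htail2 : C * (3/2 * f₃ x * A) ≤ c/2 * conv f₂ f₃ x := by
    have hKc : 6 * A * C / c * c = 6 * A * C := div_mul_cancel₀ _ (ne_of_gt hc)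
    nlinarith [mul_le_mul_of_nonneg_left hlow (le_of_lt hc), h3x.le,
      mul_le_mul_of_nonneg_left hBK (mul_nonneg (mul_nonneg (by linarith : (0:ℝ) ≤ c/2)
        (by norm_num : (0:ℝ) ≤ (1:ℝ)/2)) h3x.le)]
  have hfinal : conv f₁ f₃ x ≤ c * conv f₂ f₃ x := by
    rw [hsplit1]
    have : c/2 * (∫ y in (0:ℝ)..(x - A), f₂ (x - y) * f₃ y) ≤ c/2 * conv f₂ f₃ x :=
      mul_le_mul_of_nonneg_left hq1 (by linarith)
    linarith
  have hnn : 0 ≤ conv f₁ f₃ x :=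
    intervalIntegral.integral_nonneg hx0 (fun y _ => mul_nonneg (h1.nonneg _) (h3.nonneg _))
  rw [Real.norm_eq_abs, Real.norm_eq_abs, abs_of_nonneg hnn, abs_of_nonneg hcpos]
  exact hfinal
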